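/- Let ⟨P,<⟩ be a locally finite partially ordered set with a least element, satisfying the finitary lower covering condition. Then the Jordan–Dedekind chain condition holds: for all a ≤ b in P, all saturated chains from a to b have the same length. -/

import Mathlib

section Aux

variable {P : Type*} [PartialOrder P]

/-- `SChain a b n`: there is a saturated chain from `a` to `b` with `n` covering steps. -/
inductive SChain : P → P → ℕ → Prop where
  | refl (a : P) : SChain a a 0
  | cons {a b c : P} {n : ℕ} : a ⋖ b → SChain b c n → SChain a c (n + 1)

lemma SChain.le {a b : P} {n : ℕ} (h : SChain a b n) : a ≤ b := by
  induction h with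
  | refl => exact le_refl _
  | cons hab _ ih => exact hab.le.trans ih

lemma SChain.lt {a b : P} {n : ℕ} (h : SChain a b (n + 1)) : a < b := by
  cases h with
  | cons hab h => exact hab.lt.trans_le h.le

lemma SChain.glue {a b c : P} {m n : ℕ} (h1 : SChain a b m) (h2 : SChain b c n) :
    SChain a c (m + n) := by
  induction h1 with
  | refl => simpa using h2
  | cons hab _ ih => rw [Nat.succ_add]; exact .cons hab (ih h2)

lemma SChain.snoc_elim {a b : P} {n : ℕ} (h : SChain a b (n + 1)) :
    ∃ x, SChain a x n ∧ x ⋖ b := by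
  induction n generalizing a with
  | zero =>
    cases h with
    | cons hab h => cases h with | refl => exact ⟨a, .refl a, hab⟩
  | succ n ih =>
    cases h with
    | cons hab h =>
      obtain ⟨x, hx, hxb⟩ := ih h
      exact ⟨x, .cons hab hx, hxb⟩

lemma list_chain_schain : ∀ (t : List P), t.Chain' (· ⋖ ·) → ∀ {a b : P},
    t.head? = some a → t.getLast? = some b → SChain a b (t.length - 1) := by
  intro t
  induction t with
  | nil => intro _ a b h; simp at h
  | cons x s ih =>
    intro hch a b hha hlb
    simp only [List.head?_cons, Option.some.injEq] at hha
    subst hha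
    cases s with
    | nil =>
      simp only [List.getLast?_singleton, Option.some.injEq] at hlb
      subst hlb
      exact .refl x
    | cons y r =>
      have h1 : x ⋖ y := (List.isChain_cons_cons.mp hch).1
      have h2 : (y :: r).Chain' (· ⋖ ·) := (List.isChain_cons_cons.mp hch).2
      have hlb' : (y :: r).getLast? = some b := by
        rw [← hlb]; simp [List.getLast?_cons_cons]
      have := ih h2 rfl hlb'
      have hlen : (x :: y :: r).length - 1 = ((y :: r).length - 1) + 1 := by
        simp
      rw [hlen]
      exact .cons h1 this

/-- Existence of a saturated chain between comparable elements in a locally finite poset. -/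
lemma exists_schain (hlf : ∀ a b : P, {c | a ≤ c ∧ c ≤ b}.Finite)
    (b : P) : ∀ N (a : P), (hlf a b).toFinset.card < N → a ≤ b → ∃ n, SChain a b n := by
  intro N
  induction N with
  | zero => intro a h; omega
  | succ N ih =>
    intro a hcard hab
    rcases eq_or_lt_of_le hab with rfl | hlt
    · exact ⟨0, .refl a⟩
    · -- find a minimal element of {c | a < c ∧ c ≤ b}
      have hS : {c | a < c ∧ c ≤ b}.Finite :=
        (hlf a b).subset (fun c hc => ⟨hc.1.le, hc.2⟩)
      have hne : hS.toFinset.Nonempty := ⟨b, by simp [hlt]⟩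
      obtain ⟨x, hxS, hmin⟩ := hS.toFinset.exists_minimal hne
      simp only [Set.Finite.mem_toFinset, Set.mem_setOf_eq] at hxS
      have hax : a ⋖ x := by
        refine ⟨hxS.1, fun z hz hzx => ?_⟩
        exact absurd (hmin (by simp [Set.Finite.mem_toFinset, hz, hzx.le.trans hxS.2]) hzx.le) (not_le_of_gt hzx)
      -- the interval [x, b] is strictly smaller
      have hsub : (hlf x b).toFinset ⊆ (hlf a b).toFinset := by
        intro c hc
        simp only [Set.Finite.mem_toFinset, Set.mem_setOf_eq] at *
        exact ⟨hxS.1.le.trans hc.1, hc.2⟩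
      have hstrict : (hlf x b).toFinset.card < (hlf a b).toFinset.card := by
        refine Finset.card_lt_card (Finset.ssubset_iff_of_subset hsub |>.mpr ⟨a, ?_, ?_⟩)
        · simp [hab]
        · simp only [Set.Finite.mem_toFinset, Set.mem_setOf_eq, not_and]
          intro hxa
          exact absurd (hxa.antisymm hxS.1.le) (fun h => hxS.1.ne h.symm)
      obtain ⟨n, hn⟩ := ih x (by omega) hxS.2
      exact ⟨n + 1, .cons hax hn⟩

end Aux

/-- Jordan–Dedekind chain condition: in a locally finite poset with a least element
satisfying the finitary lower covering condition, any two saturated chains between the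
same endpoints `a ≤ b` have the same length. -/
theorem jordan_dedekind {P : Type*} [PartialOrder P] [OrderBot P]
    (hlf : ∀ a b : P, {c | a ≤ c ∧ c ≤ b}.Finite)
    (hcov : ∀ M : Finset P, 2 ≤ M.card →
      (∃ b, ∀ a ∈ M, a ⋖ b) → ∃ c, ∀ a ∈ M, c ⋖ a)
    (a b : P) (hab : a ≤ b)
    (t u : List P)
    (ht : t.Chain' (· ⋖ ·)) (hu : u.Chain' (· ⋖ ·))
    (hta : t.head? = some a) (htb : t.getLast? = some b)
    (hua : u.head? = some a) (hub : u.getLast? = some b) :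
    t.length = u.length := by
  classical
  -- uniqueness of chain length from ⊥
  have key : ∀ N (b : P) (m n : ℕ), (hlf ⊥ b).toFinset.card < N →
      SChain (⊥ : P) b m → SChain (⊥ : P) b n → m = n := by
    intro N
    induction N with
    | zero => intro b m n h; omega
    | succ N ih =>
      intro b m n hcard hm hn
      match m, n with
      | 0, 0 => rfl
      | 0, n + 1 =>
        cases hm; exact absurd hn.lt (lt_irrefl _)
      | m + 1, 0 =>
        cases hn; exact absurd hm.lt (lt_irrefl _)
      | m + 1, n + 1 =>
        obtain ⟨x, hx, hxb⟩ := hm.snoc_elim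
        obtain ⟨y, hy, hyb⟩ := hn.snoc_elim
        have smaller : ∀ z : P, z ⋖ b →
            (hlf ⊥ z).toFinset.card < (hlf ⊥ b).toFinset.card := by
          intro z hz
          refine Finset.card_lt_card (Finset.ssubset_iff_of_subset ?_ |>.mpr ⟨b, ?_, ?_⟩)
          · intro c hc
            simp only [Set.Finite.mem_toFinset, Set.mem_setOf_eq] at *
            exact ⟨hc.1, hc.2.trans hz.le⟩
          · simp
          · simp only [Set.Finite.mem_toFinset, Set.mem_setOf_eq, not_and]
            intro _
            exact fun h => absurd (h.antisymm hz.le) (fun h' => hz.lt.ne h'.symm)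
        by_cases hxy : x = y
        · subst hxy
          have := ih x m n (by have := smaller x hxb; omega) hx hy
          omega
        · obtain ⟨c, hc⟩ := hcov {x, y} (by rw [Finset.card_pair hxy])
            ⟨b, by intro z hz; rcases Finset.mem_insert.mp hz with rfl | hz
                   · exact hxb
                   · rw [Finset.mem_singleton.mp hz]; exact hyb⟩
          have hcx : c ⋖ x := hc x (by simp)
          have hcy : c ⋖ y := hc y (by simp)
          obtain ⟨k, hk⟩ := exists_schain hlf c ((hlf ⊥ c).toFinset.card + 1) ⊥
            (by omega) bot_le
          have h1 : SChain (⊥ : P) x (k + 1) := hk.glue (.cons hcx (.refl x))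
          have h2 : SChain (⊥ : P) y (k + 1) := hk.glue (.cons hcy (.refl y))
          have e1 := ih x m (k + 1) (by have := smaller x hxb; omega) hx h1
          have e2 := ih y n (k + 1) (by have := smaller y hyb; omega) hy h2
          omega
  -- general uniqueness
  have uniq : ∀ (a b : P) (m n : ℕ), SChain a b m → SChain a b n → m = n := by
    intro a b m n hm hn
    obtain ⟨k, hk⟩ := exists_schain hlf a ((hlf ⊥ a).toFinset.card + 1) ⊥ (by omega) bot_le
    have h1 : SChain (⊥ : P) b (k + m) := hk.glue hm
    have h2 : SChain (⊥ : P) b (k + n) := hk.glue hn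
    have := key ((hlf ⊥ b).toFinset.card + 1) b (k + m) (k + n) (by omega) h1 h2
    omega
  have st := list_chain_schain t ht hta htb
  have su := list_chain_schain u hu hua hub
  have := uniq a b _ _ st su
  have h1 : 1 ≤ t.length := by
    cases t; · simp at hta
    · simp
  have h2 : 1 ≤ u.length := by
    cases u; · simp at hua
    · simp
  omega
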